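/- Let G be a finite simple undirected graph, k ≥ 1 an integer, and let G[U1] and G[U2] be two distinct k-vertex connected components (k-VCCs) of G. Then |U1 ∩ U2| ≤ k − 1. -/

import Mathlib

open SimpleGraph

/-- `G[U]` is a `k`-vertex-connected (induced) subgraph of `G`: it has more than `k` vertices
and removing any set of at most `k − 1` vertices from it leaves a connected graph. -/
def KVC {V : Type*} [DecidableEq V] (G : SimpleGraph V) (k : ℕ) (U : Finset V) : Prop :=
  k < U.card ∧ ∀ S : Finset V, S ⊆ U → S.card ≤ k - 1 →
    (G.induce ((U \ S : Finset V) : Set V)).Connected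

/-- `G[U]` is a `k`-vertex connected component (`k`-VCC) of `G`: it is `k`-vertex-connected
and `U` is maximal with this property. -/
def KVCC {V : Type*} [DecidableEq V] (G : SimpleGraph V) (k : ℕ) (U : Finset V) : Prop :=
  KVC G k U ∧ ∀ U' : Finset V, U ⊆ U' → KVC G k U' → U' = U

theorem stmt1 {V : Type*} [Fintype V] [DecidableEq V] (G : SimpleGraph V) (k : ℕ)
    (hk : 1 ≤ k) (U1 U2 : Finset V) (h1 : KVCC G k U1) (h2 : KVCC G k U2)
    (hne : U1 ≠ U2) :
    (U1 ∩ U2).card ≤ k - 1 := by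
  by_contra hcard
  push_neg at hcard
  have hcard' : k ≤ (U1 ∩ U2).card := by omega
  have hKVC : KVC G k (U1 ∪ U2) := by
    constructor
    · exact lt_of_lt_of_le h1.1.1 (Finset.card_le_card Finset.subset_union_left)
    · intro S hS hScard
      have hconn1 := h1.1.2 (S ∩ U1) Finset.inter_subset_right
        (le_trans (Finset.card_le_card Finset.inter_subset_left) hScard)
      have hconn2 := h2.1.2 (S ∩ U2) Finset.inter_subset_right
        (le_trans (Finset.card_le_card Finset.inter_subset_left) hScard)
      have hset : (((U1 ∪ U2) \ S : Finset V) : Set V)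
          = ((U1 \ (S ∩ U1) : Finset V) : Set V) ∪ ((U2 \ (S ∩ U2) : Finset V) : Set V) := by
        ext v
        simp only [Finset.coe_sdiff, Finset.coe_union, Finset.coe_inter,
          Set.mem_diff, Set.mem_union, Set.mem_inter_iff]
        tauto
      rw [hset]
      apply induce_union_connected hconn1.preconnected hconn2.preconnected
      -- intersection nonempty
      have : ((U1 ∩ U2) \ S).Nonempty := by
        apply Finset.card_pos.mp
        have hle : (U1 ∩ U2).card - S.card ≤ ((U1 ∩ U2) \ S).card := by
          have := Finset.le_card_sdiff S (U1 ∩ U2)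
          omega
        omega
      obtain ⟨v, hv⟩ := this
      simp only [Finset.mem_sdiff, Finset.mem_inter] at hv
      refine ⟨v, ?_, ?_⟩ <;>
        simp only [Finset.coe_sdiff, Finset.coe_inter, Set.mem_diff, Set.mem_inter_iff] <;>
        tauto
  have e1 : U1 ∪ U2 = U1 := h1.2 (U1 ∪ U2) Finset.subset_union_left hKVC
  have e2 : U1 ∪ U2 = U2 := h2.2 (U1 ∪ U2) Finset.subset_union_right hKVC
  exact hne (e1 ▸ e2)
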